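/- For the NFA A_{π_1,...,π_k}, any two distinct subsets of the form P_1 ∪ ... ∪ P_k with ∅ ⊊ P_i ⊊ Q_i are distinguishable: there exists a string (of the form a^ℓ b) accepted from exactly one of them. -/

import Mathlib

/-- States of the NFA `A_{π_1,...,π_k}`: the initial state `q̂`, the cycle states
`q_{i,j}` (for `j < π i`), and the auxiliary states `r_{i,j}` (of which only those
with `1 ≤ j ≤ π i - 2` are used; the others have no transitions). -/
abbrev CycleState (k : ℕ) (π : Fin k → ℕ) : Type :=
  Unit ⊕ (Σ i : Fin k, Fin (π i)) ⊕ (Σ i : Fin k, Fin (π i))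

/-- The NFA `A_{π_1,...,π_k}` over the alphabet `Bool`, where `true` is the
symbol `a` and `false` is the symbol `b`. -/
def cycleNFA (k : ℕ) (π : Fin k → ℕ) (hπ : ∀ i, 0 < π i) :
    NFA Bool (CycleState k π) where
  start := {Sum.inl ()}
  accept := {Sum.inl ()}
  step := fun s c =>
    match s, c with
    | Sum.inl _, true => Set.range fun i : Fin k => Sum.inr (Sum.inl ⟨i, ⟨0, hπ i⟩⟩)
    | Sum.inl _, false => ∅
    | Sum.inr (Sum.inl ⟨i, j⟩), true =>
        {Sum.inr (Sum.inl ⟨i, ⟨(j.val + 1) % π i, Nat.mod_lt _ (hπ i)⟩⟩)}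
    | Sum.inr (Sum.inl ⟨i, j⟩), false =>
        if j.val = 0 then {Sum.inl ()}
        else if j.val ≤ π i - 2 then {Sum.inr (Sum.inr ⟨i, j⟩)} else ∅
    | Sum.inr (Sum.inr ⟨i, j⟩), true =>
        if 1 ≤ j.val ∧ j.val ≤ π i - 2 then
          {Sum.inr (Sum.inl ⟨i, ⟨(j.val + 1) % π i, Nat.mod_lt _ (hπ i)⟩⟩)}
        else ∅
    | Sum.inr (Sum.inr _), false => ∅

/-- The subset of states corresponding to `P_1 ∪ ... ∪ P_k`, where `P_i ⊆ Q_i`. -/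
def cycleSubset (k : ℕ) (π : Fin k → ℕ) (P : ∀ i : Fin k, Set (Fin (π i))) :
    Set (CycleState k π) :=
  {s | ∃ (i : Fin k) (j : Fin (π i)), j ∈ P i ∧ s = Sum.inr (Sum.inl ⟨i, j⟩)}

lemma cycleSubset_congr (k : ℕ) (π : Fin k → ℕ) {P Q : ∀ i : Fin k, Set (Fin (π i))}
    (h : ∀ i, P i = Q i) : cycleSubset k π P = cycleSubset k π Q := by
  have : P = Q := funext h
  rw [this]

lemma stepSet_a (k : ℕ) (π : Fin k → ℕ) (hπ : ∀ i, 0 < π i)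
    (P : ∀ i : Fin k, Set (Fin (π i))) :
    (cycleNFA k π hπ).stepSet (cycleSubset k π P) true =
      cycleSubset k π (fun i => {j | ∃ j' ∈ P i, (j'.val + 1) % π i = j.val}) := by
  ext s
  simp only [NFA.mem_stepSet, cycleSubset, Set.mem_setOf_eq]
  constructor
  · rintro ⟨t, ⟨i, j, hj, rfl⟩, hs⟩
    simp only [cycleNFA, Set.mem_singleton_iff] at hs
    exact ⟨i, _, ⟨j, hj, rfl⟩, hs⟩
  · rintro ⟨i, j, ⟨j', hj', hmod⟩, rfl⟩
    obtain rfl : j = ⟨(j'.val + 1) % π i, Nat.mod_lt _ (hπ i)⟩ := Fin.ext hmod.symm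
    exact ⟨Sum.inr (Sum.inl ⟨i, j'⟩), ⟨i, j', hj', rfl⟩, rfl⟩

lemma eval_a (k : ℕ) (π : Fin k → ℕ) (hπ : ∀ i, 0 < π i) (ℓ : ℕ)
    (P : ∀ i : Fin k, Set (Fin (π i))) :
    (cycleNFA k π hπ).evalFrom (cycleSubset k π P) (List.replicate ℓ true) =
      cycleSubset k π (fun i => {j | ∃ j' ∈ P i, (j'.val + ℓ) % π i = j.val}) := by
  induction ℓ generalizing P with
  | zero =>
    simp only [List.replicate, NFA.evalFrom_nil]
    apply cycleSubset_congr
    intro i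
    ext j
    simp only [Set.mem_setOf_eq]
    constructor
    · intro h; exact ⟨j, h, by simp [Nat.mod_eq_of_lt j.isLt]⟩
    · rintro ⟨j', hj', h⟩
      rwa [show j' = j from Fin.ext (by simpa [Nat.mod_eq_of_lt j'.isLt] using h)] at hj'
  | succ n ih =>
    rw [List.replicate_succ]
    have h0 : (cycleNFA k π hπ).evalFrom (cycleSubset k π P) (true :: List.replicate n true) =
        (cycleNFA k π hπ).evalFrom
          ((cycleNFA k π hπ).stepSet (cycleSubset k π P) true) (List.replicate n true) := rfl
    rw [h0, stepSet_a, ih]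
    apply cycleSubset_congr
    intro i
    ext j
    simp only [Set.mem_setOf_eq]
    constructor
    · rintro ⟨j', ⟨j'', hj'', h1⟩, h2⟩
      refine ⟨j'', hj'', ?_⟩
      rw [← h2, ← h1, Nat.mod_add_mod]
      congr 1
      omega
    · rintro ⟨j'', hj'', h⟩
      refine ⟨⟨(j''.val + 1) % π i, Nat.mod_lt _ (hπ i)⟩, ⟨j'', hj'', rfl⟩, ?_⟩
      rw [← h, Nat.mod_add_mod]
      congr 1
      omega

lemma accept_iff (k : ℕ) (π : Fin k → ℕ) (hπ : ∀ i, 0 < π i) (ℓ : ℕ)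
    (P : ∀ i : Fin k, Set (Fin (π i))) :
    ((cycleNFA k π hπ).evalFrom (cycleSubset k π P)
        (List.replicate ℓ true ++ [false]) ∩ (cycleNFA k π hπ).accept).Nonempty ↔
      ∃ i, ∃ j ∈ P i, (j.val + ℓ) % π i = 0 := by
  rw [NFA.evalFrom_append, NFA.evalFrom_singleton, eval_a]
  have haccept : (cycleNFA k π hπ).accept = {Sum.inl ()} := rfl
  rw [haccept]
  rw [Set.inter_comm, Set.singleton_inter_nonempty]
  rw [NFA.mem_stepSet]
  constructor
  · rintro ⟨t, ⟨i, j, ⟨j', hj', hm⟩, rfl⟩, ht⟩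
    simp only [cycleNFA] at ht
    by_cases h0 : j.val = 0
    · exact ⟨i, j', hj', by rw [hm, h0]⟩
    · rw [if_neg h0] at ht
      split_ifs at ht <;> simp at ht
  · rintro ⟨i, j, hj, h⟩
    refine ⟨Sum.inr (Sum.inl ⟨i, ⟨0, hπ i⟩⟩), ⟨i, _, ⟨j, hj, h⟩, rfl⟩, ?_⟩
    simp [cycleNFA]

lemma key_mod (m v j ℓ : ℕ) (hm : 0 < m) (hv : v < m) (hj : j < m)
    (hl : ℓ % m = (m - v) % m) : (j + ℓ) % m = 0 ↔ j = v := by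
  rw [Nat.add_mod j ℓ, hl, ← Nat.add_mod]
  constructor
  · intro h
    have hdvd : m ∣ (j + (m - v)) := Nat.dvd_of_mod_eq_zero h
    have hle : m ≤ j + (m - v) := Nat.le_of_dvd (by omega) hdvd
    have h2 : m ∣ (j + (m - v) - m) := Nat.dvd_sub hdvd dvd_rfl
    have h3 : j + (m - v) - m = 0 := Nat.eq_zero_of_dvd_of_lt h2 (by omega)
    omega
  · rintro rfl
    have h4 : j + (m - j) = m := by omega
    rw [h4, Nat.mod_self]

lemma one_sided (k : ℕ) (π : Fin k → ℕ) (hπ : ∀ i, 0 < π i)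
    (hcop : ∀ i j, i ≠ j → Nat.Coprime (π i) (π j))
    (A B : ∀ i : Fin k, Set (Fin (π i)))
    (hproperB : ∀ i, B i ≠ Set.univ)
    (i₀ : Fin k) (j₀ : Fin (π i₀)) (hA : j₀ ∈ A i₀) (hB : j₀ ∉ B i₀) :
    ∃ ℓ, (∃ i, ∃ j ∈ A i, (j.val + ℓ) % π i = 0) ∧
      ¬(∃ i, ∃ j ∈ B i, (j.val + ℓ) % π i = 0) := by
  have hc : ∀ i, ∃ t : Fin (π i), t ∉ B i := fun i =>
    Set.ne_univ_iff_exists_notMem _ |>.mp (hproperB i)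
  choose c hc using hc
  set v : Fin k → ℕ := fun i => if i = i₀ then j₀.val else (c i).val with hv
  have hvlt : ∀ i, v i < π i := by
    intro i
    simp only [hv]
    split
    · next h => subst h; exact j₀.isLt
    · exact (c i).isLt
  have hs : ∀ i ∈ Finset.univ, π i ≠ 0 := fun i _ => (hπ i).ne'
  have pp : Set.Pairwise (Finset.univ : Finset (Fin k)) (Function.onFun Nat.Coprime π) :=
    fun i _ j _ hij => hcop i j hij
  obtain ⟨ℓ, hℓ⟩ := Nat.chineseRemainderOfFinset (fun i => π i - v i) π Finset.univ hs pp
  have hkey : ∀ i (j : Fin (π i)), (j.val + ℓ) % π i = 0 ↔ j.val = v i := by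
    intro i j
    exact key_mod (π i) (v i) j.val ℓ (hπ i) (hvlt i) j.isLt (hℓ i (Finset.mem_univ i))
  refine ⟨ℓ, ⟨i₀, j₀, hA, ?_⟩, ?_⟩
  · rw [hkey]; simp [hv]
  · rintro ⟨i, j, hj, h⟩
    rw [hkey] at h
    by_cases hi : i = i₀
    · subst hi
      simp only [hv, if_pos rfl] at h
      exact hB (Fin.ext h ▸ hj)
    · simp only [hv, if_neg hi] at h
      exact hc i (Fin.ext h ▸ hj)

theorem cycle_subsets_distinguishable (k : ℕ) (hk : 2 ≤ k) (π : Fin k → ℕ)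
    (hπ3 : ∀ i, 3 ≤ π i) (hπ1 : ∀ h : 0 < k, π ⟨0, h⟩ = 3)
    (hcop : ∀ i j, i ≠ j → Nat.Coprime (π i) (π j))
    (hπ : ∀ i, 0 < π i)
    (P P' : ∀ i : Fin k, Set (Fin (π i)))
    (hne : ∀ i, (P i).Nonempty) (hproper : ∀ i, P i ≠ Set.univ)
    (hne' : ∀ i, (P' i).Nonempty) (hproper' : ∀ i, P' i ≠ Set.univ)
    (hdiff : P ≠ P') :
    ∃ ℓ : ℕ,
      Xor'
        (((cycleNFA k π hπ).evalFrom (cycleSubset k π P)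
            (List.replicate ℓ true ++ [false]) ∩ (cycleNFA k π hπ).accept).Nonempty)
        (((cycleNFA k π hπ).evalFrom (cycleSubset k π P')
            (List.replicate ℓ true ++ [false]) ∩ (cycleNFA k π hπ).accept).Nonempty) := by
  obtain ⟨i₀, hi₀⟩ := Function.ne_iff.mp hdiff
  obtain ⟨j₀, hj₀⟩ : ∃ j, ¬(j ∈ P i₀ ↔ j ∈ P' i₀) := by
    by_contra h
    push_neg at h
    exact hi₀ (Set.ext h)
  rw [iff_iff_implies_and_implies, not_and_or] at hj₀
  rcases hj₀ with h | h
  · push_neg at h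
    obtain ⟨hPj, hP'j⟩ := h
    obtain ⟨ℓ, h1, h2⟩ := one_sided k π hπ hcop P P' hproper' i₀ j₀ hPj hP'j
    exact ⟨ℓ, Or.inl ⟨(accept_iff k π hπ ℓ P).mpr h1, fun hx => h2 ((accept_iff k π hπ ℓ P').mp hx)⟩⟩
  · push_neg at h
    obtain ⟨hP'j, hPj⟩ := h
    obtain ⟨ℓ, h1, h2⟩ := one_sided k π hπ hcop P' P hproper i₀ j₀ hP'j hPj
    exact ⟨ℓ, Or.inr ⟨(accept_iff k π hπ ℓ P').mpr h1, fun hx => h2 ((accept_iff k π hπ ℓ P).mp hx)⟩⟩
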